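/- arXiv:0706.1077 — 4 statements merged into one kernel-verified Lean document; each statement's English description precedes it below -/
import Mathlib

section
/- For each fixed r ∈ (0, 1], define H(x, r) = (r·cos(2x)·sin(2r) + 2r²)/(cos x)². Then x ↦ H(x, r) is antitone (nonincreasing) on (−π/4, 0] and monotone (nondecreasing) on [0, π/4). Consequently, setting W(x, r) = [cos(2x)·sin(2r)/2 + r] / [2·(cos x)²·(sin r)²/r], one has W(x, r) ≤ r²/(sin r)² for all x ∈ (−π/4, π/4) and all r ∈ (0, 1]. -/
open Real Set

noncomputable def Hfun (x r : ℝ) : ℝ :=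
  (r * Real.cos (2 * x) * Real.sin (2 * r) + 2 * r ^ 2) / (Real.cos x) ^ 2

noncomputable def Wfun (x r : ℝ) : ℝ :=
  (Real.cos (2 * x) * Real.sin (2 * r) / 2 + r) / (2 * (Real.cos x) ^ 2 * (Real.sin r) ^ 2 / r)

lemma cos_pos_aux {x : ℝ} (h1 : -(π / 4) < x) (h2 : x ≤ π / 4) : 0 < Real.cos x := by
  apply Real.cos_pos_of_mem_Ioo
  constructor <;> [linarith [Real.pi_pos]; linarith [Real.pi_pos]]

lemma Hfun_eq (x r : ℝ) (hx : Real.cos x ≠ 0) :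
    Hfun x r = 2 * r * Real.sin (2 * r) + r * (2 * r - Real.sin (2 * r)) / (Real.cos x) ^ 2 := by
  unfold Hfun
  rw [Real.cos_two_mul]
  field_simp
  ring

/-- For each fixed `r ∈ (0,1]`, `x ↦ H(x,r)` is antitone on `(-π/4, 0]` and monotone on
`[0, π/4)`; consequently `W(x,r) ≤ r²/(sin r)²` for all `x ∈ (-π/4, π/4)`. -/
theorem Hfun_antitone_monotone_and_Wfun_le (r : ℝ) (hr : r ∈ Ioc (0 : ℝ) 1) :
    AntitoneOn (fun x => Hfun x r) (Ioc (-(π / 4)) 0) ∧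
    MonotoneOn (fun x => Hfun x r) (Ico 0 (π / 4)) ∧
    ∀ x ∈ Ioo (-(π / 4)) (π / 4), Wfun x r ≤ r ^ 2 / (Real.sin r) ^ 2 := by
  obtain ⟨hr0, hr1⟩ := hr
  have hs2 : Real.sin (2 * r) < 2 * r := Real.sin_lt (by linarith)
  have hc : 0 ≤ r * (2 * r - Real.sin (2 * r)) := by nlinarith
  refine ⟨?_, ?_, ?_⟩
  · intro a ha b hb hab
    have hca : 0 < Real.cos a := cos_pos_aux ha.1 (by linarith [ha.2, Real.pi_pos])
    have hcb : 0 < Real.cos b := cos_pos_aux (lt_of_lt_of_le ha.1 hab) (by linarith [hb.2, Real.pi_pos])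
    have hcc : Real.cos a ≤ Real.cos b := by
      have := Real.cos_le_cos_of_nonneg_of_le_pi (x := -b) (y := -a)
        (by linarith [hb.2]) (by nlinarith [Real.pi_pos, ha.1]) (by linarith)
      simpa using this
    simp only [Hfun_eq a r hca.ne', Hfun_eq b r hcb.ne']
    have : Real.cos a ^ 2 ≤ Real.cos b ^ 2 := by nlinarith
    have := div_le_div_of_nonneg_left hc (by positivity : (0:ℝ) < Real.cos a ^ 2) this
    linarith
  · intro a ha b hb hab
    have hca : 0 < Real.cos a := cos_pos_aux (by linarith [ha.1, Real.pi_pos]) (by linarith [ha.2])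
    have hcb : 0 < Real.cos b := cos_pos_aux (by linarith [hb.1, Real.pi_pos]) (by linarith [hb.2])
    have hcc : Real.cos b ≤ Real.cos a :=
      Real.cos_le_cos_of_nonneg_of_le_pi ha.1 (by nlinarith [Real.pi_pos, hb.2]) hab
    simp only [Hfun_eq a r hca.ne', Hfun_eq b r hcb.ne']
    have : Real.cos b ^ 2 ≤ Real.cos a ^ 2 := by nlinarith
    have := div_le_div_of_nonneg_left hc (by positivity : (0:ℝ) < Real.cos b ^ 2) this
    linarith
  · intro x hx
    have hcx : 0 < Real.cos x := cos_pos_aux hx.1 hx.2.le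
    have hsr : 0 < Real.sin r := Real.sin_pos_of_pos_of_lt_pi hr0 (by nlinarith [Real.pi_gt_three])
    have hd : 0 ≤ Real.cos (2 * x) := by
      apply Real.cos_nonneg_of_mem_Icc
      constructor <;> [linarith [hx.1]; linarith [hx.2]]
    have hW : Wfun x r = Hfun x r / (4 * Real.sin r ^ 2) := by
      unfold Wfun Hfun
      rw [div_div_eq_mul_div, div_div, div_eq_div_iff (by positivity) (by positivity)]
      ring
    have hd2 : (0:ℝ) ≤ 2 * Real.cos x ^ 2 - 1 := by rw [← Real.cos_two_mul]; exact hd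
    have hH : Hfun x r ≤ 4 * r ^ 2 := by
      unfold Hfun
      rw [div_le_iff₀ (by positivity), Real.cos_two_mul]
      nlinarith [mul_nonneg (mul_nonneg hr0.le hd2) (by linarith : (0:ℝ) ≤ 2 * r - Real.sin (2 * r))]
    rw [hW]
    calc Hfun x r / (4 * Real.sin r ^ 2) ≤ 4 * r ^ 2 / (4 * Real.sin r ^ 2) := by
          apply div_le_div_of_nonneg_right hH (by positivity)
      _ = r ^ 2 / Real.sin r ^ 2 := by field_simp
end

section
/- For every real x and every r > 0 such that both x − r and x + r lie in (−π/4, π/4), one has ∫_{x−r}^{x+r} (1 + (cos s)²) ds ≤ (r²/(sin r)²) · G²/(2r), where G² = min{ (2r)² + (sin(x+r) − sin(x−r))², (sin(x+r) − (x−r))² + ((x+r) − sin(x−r))² }. (Equivalently: the two-valued function u(x) = [[x]] + [[sin x]] on (−π/4, π/4) is a Dirichlet ω-minimizer with gauge ω(r) = r²/(sin r)² − 1, and its Dirichlet energy over (x−r, x+r) equals ∫ (1 + cos²).) -/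
open Real Set

private lemma core_ineq (r : ℝ) (hr : 0 < r) (hr1 : r ≤ 1) :
    2 * Real.sin r ^ 2 + 2 * Real.cos r ^ 2 * Real.sin r ^ 2 ≤ (r + Real.cos r * Real.sin r) ^ 2 := by
  set s := Real.sin r with hs
  set c := Real.cos r with hc
  have hs1 : s ≤ r := Real.sin_le hr.le
  have hs2 : r - r ^ 3 / 4 < s := by linarith [Real.sin_gt_sub_cube hr, (by positivity : (0:ℝ) < r ^ 3)]
  have hcl : 1 - r ^ 2 / 2 < c := Real.one_sub_sq_div_two_lt_cos (by positivity)
  have hpyr : s ^ 2 + c ^ 2 = 1 := Real.sin_sq_add_cos_sq r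
  have hs0 : 0 < s := by nlinarith
  have he0 : 0 ≤ r - s := by linarith
  have he1 : r - s < r ^ 3 / 4 := by linarith
  have h4 : 0 ≤ 4 * r - 3 * r ^ 3 - 3 * (r - s) := by nlinarith
  have h5 : 0 ≤ 6 * r ^ 2 - 4 * r * (r - s) + (r - s) ^ 2 := by nlinarith
  have hG : 0 ≤ r ^ 2 + 2 * r * s - r ^ 3 * s - 3 * s ^ 2 + s ^ 4 := by
    nlinarith [mul_nonneg he0 h4, mul_nonneg (sq_nonneg (r - s)) h5]
  have hc2eq : c ^ 2 = 1 - s ^ 2 := by linarith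
  have h7 : c ^ 2 * s ^ 2 = s ^ 2 - s ^ 4 := by rw [hc2eq]; ring
  have h6 : 2 * r * s * (1 - r ^ 2 / 2) ≤ 2 * r * s * c :=
    mul_le_mul_of_nonneg_left hcl.le (by positivity)
  nlinarith [hG, h6, h7]

set_option maxHeartbeats 1000000 in
/-- The two-valued function `u(x) = [[x]] + [[sin x]]` on `(-π/4, π/4)` is a Dirichlet
`ω`-minimizer with gauge `ω(r) = r²/(sin r)² - 1`: its Dirichlet energy `∫ (1 + cos²)` over
any subinterval `(x-r, x+r)` is at most `r²/(sin r)²` times `G²/(2r)`, where `G²` is the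
squared Almgren distance between the boundary values. -/
theorem two_valued_sin_is_omega_minimizer (x r : ℝ) (hr : 0 < r)
    (h₁ : x - r ∈ Ioo (-(π / 4)) (π / 4)) (h₂ : x + r ∈ Ioo (-(π / 4)) (π / 4)) :
    ∫ s in (x - r)..(x + r), (1 + (Real.cos s) ^ 2) ≤
      (r ^ 2 / (Real.sin r) ^ 2) *
        (min ((2 * r) ^ 2 + (Real.sin (x + r) - Real.sin (x - r)) ^ 2)
             ((Real.sin (x + r) - (x - r)) ^ 2 + ((x + r) - Real.sin (x - r)) ^ 2) / (2 * r)) := by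
  obtain ⟨ha1, ha2⟩ := h₁
  obtain ⟨hb1, hb2⟩ := h₂
  have hπ : (3.14 : ℝ) < π := by linarith [Real.pi_gt_d6]
  have hπ' : π < 3.15 := by linarith [Real.pi_lt_d2]
  have hrlt : r < π / 4 := by linarith
  have hr1 : r ≤ 1 := by linarith
  -- the integral
  have hint : (∫ s in (x - r)..(x + r), (1 + (Real.cos s) ^ 2)) =
      3 * r + (Real.cos x ^ 2 - Real.sin x ^ 2) * (Real.sin r * Real.cos r) := by
    have h1 : IntervalIntegrable (fun _ : ℝ => (1 : ℝ)) MeasureTheory.volume (x - r) (x + r) :=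
      intervalIntegrable_const
    have h2 : IntervalIntegrable (fun s : ℝ => Real.cos s ^ 2) MeasureTheory.volume (x - r) (x + r) :=
      (Real.continuous_cos.pow 2).intervalIntegrable _ _
    rw [intervalIntegral.integral_add h1 h2, intervalIntegral.integral_const, integral_cos_sq,
      Real.sin_add, Real.sin_sub, Real.cos_add, Real.cos_sub, smul_eq_mul]
    nlinarith [Real.sin_sq_add_cos_sq x, Real.sin_sq_add_cos_sq r]
  rw [hint, Real.sin_add, Real.sin_sub]
  set sx := Real.sin x with hsx
  set cx := Real.cos x with hcx
  set sr := Real.sin r with hsr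
  set cr := Real.cos r with hcr
  have hpyx : sx ^ 2 + cx ^ 2 = 1 := Real.sin_sq_add_cos_sq x
  have hpyr : sr ^ 2 + cr ^ 2 = 1 := Real.sin_sq_add_cos_sq r
  have hsr0 : 0 < sr := Real.sin_pos_of_pos_of_lt_pi hr (by linarith)
  have hsrle : sr ≤ r := Real.sin_le hr.le
  have hcr1 : cr ≤ 1 := Real.cos_le_one r
  have hcr0 : 0 < cr := Real.cos_pos_of_mem_Ioo ⟨by linarith, by linarith⟩
  have hsrcr : sr * cr ≤ r := by nlinarith
  -- cos 2x ≥ 0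
  have hcos2x : 0 ≤ cx ^ 2 - sx ^ 2 := by
    have h := Real.cos_nonneg_of_mem_Icc (x := 2 * x) ⟨by linarith, by linarith⟩
    rw [Real.cos_two_mul] at h
    nlinarith [hpyx]
  rcases le_total ((2 * r) ^ 2 + (sx * cr + cx * sr - (sx * cr - cx * sr)) ^ 2)
      ((sx * cr + cx * sr - (x - r)) ^ 2 + ((x + r) - (sx * cr - cx * sr)) ^ 2) with hmin | hmin
  · rw [min_eq_left hmin, div_mul_div_comm, le_div_iff₀ (by positivity)]
    nlinarith [mul_nonneg (mul_nonneg (mul_nonneg (sub_nonneg.2 hsrcr) hcos2x) (sq_nonneg sr)) hr.le,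
      mul_nonneg (mul_nonneg (sub_nonneg.2 hsrle) (by positivity : (0:ℝ) ≤ r + sr)) (sq_nonneg r),
      hpyx, sq_nonneg sr, mul_pos hsr0 hr, sq_nonneg (r * sr)]
  · rw [min_eq_right hmin, div_mul_div_comm, le_div_iff₀ (by positivity)]
    -- cross ≤ id forces x - r ≤ 0 ≤ x + r
    have hprod : (sx * cr + cx * sr - (x + r)) * ((sx * cr - cx * sr) - (x - r)) ≤ 0 := by
      have hid : ((sx * cr + cx * sr - (x - r)) ^ 2 + ((x + r) - (sx * cr - cx * sr)) ^ 2)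
            - ((2 * r) ^ 2 + (sx * cr + cx * sr - (sx * cr - cx * sr)) ^ 2)
          = 2 * ((sx * cr + cx * sr - (x + r)) * ((sx * cr - cx * sr) - (x - r))) := by
        ring
      linarith
    have hale : x - r ≤ 0 := by
      by_contra h
      push_neg at h
      have h1 : Real.sin (x - r) < x - r := Real.sin_lt h
      have h2 : Real.sin (x + r) < x + r := Real.sin_lt (by linarith)
      rw [Real.sin_sub] at h1
      rw [Real.sin_add] at h2
      nlinarith [hprod, h1, h2]
    have hble : 0 ≤ x + r := by
      by_contra h
      push_neg at h
      have h1 : x - r < Real.sin (x - r) := by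
        have := Real.sin_lt (x := -(x - r)) (by linarith)
        rw [Real.sin_neg] at this; linarith
      have h2 : x + r < Real.sin (x + r) := by
        have := Real.sin_lt (x := -(x + r)) (by linarith)
        rw [Real.sin_neg] at this; linarith
      rw [Real.sin_sub] at h1
      rw [Real.sin_add] at h2
      nlinarith [hprod, h1, h2]
    -- |x| ≤ r hence cos r ≤ cos x
    have hcxcr : cr ≤ cx := by
      have habs : |x| ≤ r := abs_le.2 ⟨by linarith, by linarith⟩
      have := Real.cos_le_cos_of_nonneg_of_le_pi (abs_nonneg x) (by linarith) habs
      rwa [Real.cos_abs] at this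
    have hcore := core_ineq r hr hr1
    rw [← hsr, ← hcr] at hcore
    have hcx1 : cx ≤ 1 := Real.cos_le_one x
    -- monotonicity in c: sr^2*(2+2cx^2) ≤ (r + cx*sr)^2
    have hstep1 : sr ^ 2 * (2 + 2 * cx ^ 2) ≤ (r + cx * sr) ^ 2 := by
      nlinarith [hcore, mul_nonneg (mul_nonneg (sub_nonneg.2 hcxcr) hsr0.le)
        (by nlinarith : (0:ℝ) ≤ 2 * r - sr * (cx + cr))]
    have hstep2 : 2 * (r + cx * sr) ^ 2 ≤
        (sx * cr + cx * sr - (x - r)) ^ 2 + ((x + r) - (sx * cr - cx * sr)) ^ 2 := by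
      nlinarith [sq_nonneg (sx * cr - x)]
    have hstep1' : 2 * r ^ 2 * (sr ^ 2 * (2 + 2 * cx ^ 2)) ≤ 2 * r ^ 2 * (r + cx * sr) ^ 2 :=
      mul_le_mul_of_nonneg_left hstep1 (by positivity)
    have hstep2' : r ^ 2 * (2 * (r + cx * sr) ^ 2) ≤
        r ^ 2 * ((sx * cr + cx * sr - (x - r)) ^ 2 + ((x + r) - (sx * cr - cx * sr)) ^ 2) :=
      mul_le_mul_of_nonneg_left hstep2 (by positivity)
    nlinarith [hstep1', hstep2',
      mul_nonneg (mul_nonneg (mul_nonneg (sub_nonneg.2 hsrcr) hcos2x) (sq_nonneg sr)) hr.le,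
      hpyx, sq_nonneg (r * sr)]
end

section
/- Let f, g : ℝ → ℝ be 1-Lipschitz functions with f ≤ g such that deriv f (x) + deriv g (x) ≥ 1 for almost every x ∈ [0,1]. Then for all 0 ≤ a < b ≤ 1, ∫_a^b ((deriv f t)² + (deriv g t)²) dt ≤ 4 · ((f b − f a)² + (g b − g a)²)/(b − a). (This is the statement that every pluri-diamond, i.e. the two-valued function u = [[f]] + [[g]] arising from such a pair, is a Dirichlet 4-quasiminimizer.) -/
open Real Set MeasureTheory
open scoped ENNReal NNReal

/-- The derivative of a 1-Lipschitz function is bounded by 1 in absolute value. -/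
lemma abs_deriv_le_of_lipschitz {f : ℝ → ℝ} (hf : LipschitzWith 1 f) (x : ℝ) :
    |deriv f x| ≤ 1 := by
  have h1 : ‖fderiv ℝ f x‖ ≤ (1 : ℝ) := by simpa using norm_fderiv_le_of_lipschitz ℝ hf
  have h2 : (fderiv ℝ f x) 1 = deriv f x := fderiv_apply_one_eq_deriv
  calc |deriv f x| = ‖(fderiv ℝ f x) 1‖ := by rw [h2]; rfl
    _ ≤ ‖fderiv ℝ f x‖ * ‖(1 : ℝ)‖ := (fderiv ℝ f x).le_opNorm 1
    _ ≤ 1 := by simpa using h1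

/-- FTC inequality for monotone continuous functions. -/
lemma monotone_integral_deriv_le {h : ℝ → ℝ} (hm : Monotone h) (hc : Continuous h)
    {a b : ℝ} (hab : a ≤ b) : ∫ t in Set.Ioc a b, deriv h t ≤ h b - h a := by
  set S : StieltjesFunction ℝ := ⟨h, hm, fun x => hc.continuousWithinAt⟩ with hS
  have h1 : ∀ᵐ x, deriv h x = (S.measure.rnDeriv volume x).toReal := by
    filter_upwards [S.ae_hasDerivAt] with x hx using hx.deriv
  have hfin : S.measure (Set.Ioc a b) ≠ ∞ := by
    rw [S.measure_Ioc]; exact ENNReal.ofReal_ne_top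
  calc ∫ t in Set.Ioc a b, deriv h t
      = ∫ t in Set.Ioc a b, (S.measure.rnDeriv volume t).toReal :=
        integral_congr_ae (ae_restrict_of_ae h1)
    _ ≤ (S.measure (Set.Ioc a b)).toReal := Measure.setIntegral_toReal_rnDeriv_le hfin
    _ = h b - h a := by
        rw [S.measure_Ioc, ENNReal.toReal_ofReal (by linarith [hm hab])]

/-- FTC inequality for 1-Lipschitz functions. -/
lemma lipschitz_integral_deriv_le {f : ℝ → ℝ} (hf : LipschitzWith 1 f)
    {a b : ℝ} (hab : a ≤ b) : ∫ t in Set.Ioc a b, deriv f t ≤ f b - f a := by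
  set F : ℝ → ℝ := fun x => f x + x with hFdef
  have hm : Monotone F := by
    intro x y hxy
    have := hf.dist_le_mul x y
    simp only [Real.dist_eq, NNReal.coe_one, one_mul] at this
    have h1 : f x - f y ≤ |x - y| := le_trans (le_abs_self _) this
    rw [abs_of_nonpos (by linarith : x - y ≤ 0)] at h1
    simp only [hFdef]; linarith
  have hc : Continuous F := hf.continuous.add continuous_id
  have hdae : ∀ᵐ x, deriv F x = deriv f x + 1 := by
    filter_upwards [hf.ae_differentiableAt] with x hx
    rw [hFdef]
    rw [deriv_fun_add hx differentiableAt_fun_id]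
    simp
  have hintf : IntegrableOn (deriv f) (Set.Ioc a b) := by
    refine Integrable.mono' (g := fun _ => (1 : ℝ)) ?_
      (measurable_deriv f).aestronglyMeasurable
      (ae_of_all _ fun x => by simpa using abs_deriv_le_of_lipschitz hf x)
    exact integrableOn_const measure_Ioc_lt_top.ne
  have key : ∫ t in Set.Ioc a b, deriv F t ≤ F b - F a := monotone_integral_deriv_le hm hc hab
  have heq : ∫ t in Set.Ioc a b, deriv F t = (∫ t in Set.Ioc a b, deriv f t) + (b - a) := by
    rw [integral_congr_ae (ae_restrict_of_ae hdae), integral_add hintf (integrableOn_const measure_Ioc_lt_top.ne)]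
    rw [setIntegral_const]
    rw [Real.volume_real_Ioc_of_le hab, smul_eq_mul, mul_one]
  simp only [hFdef] at key
  linarith [heq ▸ key]

set_option maxHeartbeats 1000000 in
/-- Every pluri-diamond is a Dirichlet 4-quasiminimizer: if `f ≤ g` are 1-Lipschitz with
`deriv f + deriv g ≥ 1` a.e. on `[0,1]`, then on every subinterval `(a,b)` of `[0,1]` the
Dirichlet energy of `u = [[f]] + [[g]]` is at most `4` times the squared Almgren distance
of the boundary values divided by `b - a`. -/
theorem pluri_diamond_is_quasiminimizer (f g : ℝ → ℝ)
    (hf : LipschitzWith 1 f) (hg : LipschitzWith 1 g) (hfg : ∀ x, f x ≤ g x)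
    (hderiv : ∀ᵐ x ∂(volume.restrict (Icc (0 : ℝ) 1)), 1 ≤ deriv f x + deriv g x)
    (a b : ℝ) (ha : 0 ≤ a) (hab : a < b) (hb : b ≤ 1) :
    ∫ t in a..b, ((deriv f t) ^ 2 + (deriv g t) ^ 2) ≤
      4 * (((f b - f a) ^ 2 + (g b - g a) ^ 2) / (b - a)) := by
  have hd : 0 < b - a := sub_pos.2 hab
  have hsub : Set.Ioc a b ⊆ Set.Icc (0 : ℝ) 1 := fun x hx => ⟨ha.trans hx.1.le, hx.2.trans hb⟩
  have hae1 : ∀ᵐ x ∂(volume.restrict (Set.Ioc a b)), 1 ≤ deriv f x + deriv g x :=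
    ae_mono (Measure.restrict_mono hsub le_rfl) hderiv
  have hintf : IntegrableOn (deriv f) (Set.Ioc a b) := by
    refine Integrable.mono' (g := fun _ => (1 : ℝ)) ?_
      (measurable_deriv f).aestronglyMeasurable
      (ae_of_all _ fun x => by simpa using abs_deriv_le_of_lipschitz hf x)
    exact integrableOn_const measure_Ioc_lt_top.ne
  have hintg : IntegrableOn (deriv g) (Set.Ioc a b) := by
    refine Integrable.mono' (g := fun _ => (1 : ℝ)) ?_
      (measurable_deriv g).aestronglyMeasurable
      (ae_of_all _ fun x => by simpa using abs_deriv_le_of_lipschitz hg x)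
    exact integrableOn_const measure_Ioc_lt_top.ne
  have hintE : IntegrableOn (fun t => (deriv f t) ^ 2 + (deriv g t) ^ 2) (Set.Ioc a b) := by
    refine Integrable.mono' (g := fun _ => (2 : ℝ)) ?_
      (((measurable_deriv f).pow_const 2).add ((measurable_deriv g).pow_const 2)).aestronglyMeasurable
      (ae_of_all _ fun x => ?_)
    · exact integrableOn_const measure_Ioc_lt_top.ne
    · have h1 := abs_deriv_le_of_lipschitz hf x
      have h2 := abs_deriv_le_of_lipschitz hg x
      rw [Real.norm_eq_abs]
      have hf2 : (deriv f x) ^ 2 ≤ 1 := by nlinarith [abs_nonneg (deriv f x), sq_abs (deriv f x)]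
      have hg2 : (deriv g x) ^ 2 ≤ 1 := by nlinarith [abs_nonneg (deriv g x), sq_abs (deriv g x)]
      have : (deriv f x) ^ 2 + (deriv g x) ^ 2 ≤ 2 := by linarith
      have h0 : (0:ℝ) ≤ (deriv f x) ^ 2 + (deriv g x) ^ 2 := by positivity
      rw [abs_of_nonneg h0]; exact this
  have hpt : ∀ᵐ x ∂(volume.restrict (Set.Ioc a b)),
      (deriv f x) ^ 2 + (deriv g x) ^ 2 ≤ deriv f x + deriv g x := by
    filter_upwards [hae1] with x hx
    have h1 := abs_le.1 (abs_deriv_le_of_lipschitz hf x)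
    have h2 := abs_le.1 (abs_deriv_le_of_lipschitz hg x)
    have hf0 : 0 ≤ deriv f x := by linarith
    have hg0 : 0 ≤ deriv g x := by linarith
    nlinarith
  have hmono : ∫ t in Set.Ioc a b, ((deriv f t) ^ 2 + (deriv g t) ^ 2)
      ≤ ∫ t in Set.Ioc a b, (deriv f t + deriv g t) :=
    integral_mono_ae hintE (hintf.add hintg) hpt
  have hlow : b - a ≤ ∫ t in Set.Ioc a b, (deriv f t + deriv g t) := by
    have h1 : (fun _ : ℝ => (1:ℝ)) ≤ᵐ[volume.restrict (Set.Ioc a b)]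
        fun x => deriv f x + deriv g x := hae1
    have hc : IntegrableOn (fun _ : ℝ => (1:ℝ)) (Set.Ioc a b) volume :=
      integrableOn_const measure_Ioc_lt_top.ne
    have := integral_mono_ae hc (hintf.add hintg) h1
    rwa [setIntegral_const, Real.volume_real_Ioc_of_le hab.le, smul_eq_mul,
      mul_one] at this
  have hup : ∫ t in Set.Ioc a b, (deriv f t + deriv g t) ≤ (f b - f a) + (g b - g a) := by
    rw [integral_add hintf hintg]
    have e1 := lipschitz_integral_deriv_le hf hab.le
    have e2 := lipschitz_integral_deriv_le hg hab.le
    linarith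
  set X := f b - f a with hX
  set Y := g b - g a with hY
  have hXY : b - a ≤ X + Y := hlow.trans hup
  have hfinal : X + Y ≤ 4 * ((X ^ 2 + Y ^ 2) / (b - a)) := by
    rw [mul_div_assoc', le_div_iff₀ hd]
    nlinarith [sq_nonneg (X - Y), sq_nonneg (X + Y - (b - a)), mul_nonneg (sub_nonneg.2 hXY) hd.le]
  calc ∫ t in a..b, ((deriv f t) ^ 2 + (deriv g t) ^ 2)
      = ∫ t in Set.Ioc a b, ((deriv f t) ^ 2 + (deriv g t) ^ 2) :=
        intervalIntegral.integral_of_le hab.le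
    _ ≤ X + Y := hmono.trans hup
    _ ≤ 4 * ((X ^ 2 + Y ^ 2) / (b - a)) := hfinal
end

section
/- Let K ≥ 1 and let f, g : ℝ → ℝ be Lipschitz functions with f ≤ g on (−1,1). Then the following are equivalent: (i) for every interval [a,b] ⊂ (−1,1) and every pair of Lipschitz functions F, G : [a,b] → ℝ with F ≤ G, F(a) = f(a), G(a) = g(a), F(b) = f(b), G(b) = g(b), one has ∫_a^b ((deriv f)² + (deriv g)²) ≤ K · ∫_a^b ((deriv F)² + (deriv G)²); (ii) for every interval [a,b] ⊂ (−1,1), one has ∫_a^b ((deriv f)² + (deriv g)²) ≤ K · ((f b − f a)² + (g b − g a)²)/(b − a). (This is the one-dimensional, two-valued characterization: u = [[f]] + [[g]] is a Dirichlet K-quasiminimizer if and only if Dir(u,(a,b)) ≤ K · G²(u(b), u(a))/(b − a) for every subinterval.) -/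
open Real Set MeasureTheory

open Filter Topology intervalIntegral

lemma lip_abs_deriv_le {L : NNReal} {F : ℝ → ℝ} (hF : LipschitzWith L F) (t : ℝ) :
    |deriv F t| ≤ L := by
  by_cases h : DifferentiableAt ℝ F t
  · have hd := h.hasDerivAt
    rw [hasDerivAt_iff_tendsto_slope] at hd
    refine le_of_tendsto hd.abs ?_
    filter_upwards [self_mem_nhdsWithin] with y hy
    have hyt : (y : ℝ) - t ≠ 0 := sub_ne_zero.2 hy
    have hdist := hF.dist_le_mul y t
    rw [Real.dist_eq, Real.dist_eq] at hdist
    rw [slope_def_field, abs_div, div_le_iff₀ (abs_pos.2 hyt)]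
    simpa using hdist
  · simp [deriv_zero_of_not_differentiableAt h]

lemma lip_deriv_intInt {L : NNReal} {F : ℝ → ℝ} (hF : LipschitzWith L F) (a b : ℝ) :
    IntervalIntegrable (deriv F) volume a b := by
  rw [intervalIntegrable_iff]
  refine Integrable.mono' (g := fun _ => (L : ℝ)) ?_ ?_ ?_
  · exact integrableOn_const (by rw [Set.uIoc]; exact measure_Ioc_lt_top.ne)
  · exact (measurable_deriv F).aestronglyMeasurable
  · exact ae_of_all _ fun t => by simpa using lip_abs_deriv_le hF t

lemma lip_deriv_sq_intInt {L : NNReal} {F : ℝ → ℝ} (hF : LipschitzWith L F) (a b : ℝ) :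
    IntervalIntegrable (fun t => (deriv F t) ^ 2) volume a b := by
  rw [intervalIntegrable_iff]
  refine Integrable.mono' (g := fun _ => ((L : ℝ)) ^ 2) ?_ ?_ ?_
  · exact integrableOn_const (by rw [Set.uIoc]; exact measure_Ioc_lt_top.ne)
  · exact ((measurable_deriv F).pow_const 2).aestronglyMeasurable
  · refine ae_of_all _ fun t => ?_
    have := lip_abs_deriv_le hF t
    have h0 : (0:ℝ) ≤ L := L.coe_nonneg
    rw [Real.norm_eq_abs, abs_pow]
    exact pow_le_pow_left₀ (abs_nonneg _) this 2

lemma lip_ftc {L : NNReal} {F : ℝ → ℝ} (hF : LipschitzWith L F) {a b : ℝ} (hab : a ≤ b) :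
    ∫ t in a..b, deriv F t = F b - F a := by
  rcases eq_or_lt_of_le hab with rfl | hab'
  · simp
  have hFc : Continuous F := hF.continuous
  set h : ℕ → ℝ := fun n => 1 / (n + 1 : ℝ) with hh
  have hpos : ∀ n, 0 < h n := fun n => by positivity
  have hlim : Tendsto h atTop (𝓝 0) := tendsto_one_div_add_atTop_nhds_zero_nat
  have hseq : ∀ c : ℝ, Tendsto (fun n => c + h n) atTop (𝓝[≠] c) := by
    intro c
    apply tendsto_nhdsWithin_of_tendsto_nhds_of_eventually_within
    · simpa using tendsto_const_nhds.add hlim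
    · exact Eventually.of_forall fun n => by
        simp [mem_compl_singleton_iff, (hpos n).ne']
  have step1 : ∀ n, (∫ t in a..b, (F (t + h n) - F t) / h n)
      = ((∫ t in b..(b + h n), F t) - ∫ t in a..(a + h n), F t) / h n := by
    intro n
    rw [intervalIntegral.integral_div]
    congr 1
    have i1 : IntervalIntegrable (fun t => F (t + h n)) volume a b :=
      (hFc.comp (continuous_add_right _)).intervalIntegrable _ _
    rw [intervalIntegral.integral_sub i1 (hFc.intervalIntegrable _ _)]
    rw [intervalIntegral.integral_comp_add_right F (h n)]
    have c1 : (∫ t in (a + h n)..b, F t) + (∫ t in b..(b + h n), F t)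
        = ∫ t in (a + h n)..(b + h n), F t :=
      intervalIntegral.integral_add_adjacent_intervals (hFc.intervalIntegrable _ _)
        (hFc.intervalIntegrable _ _)
    have c2 : (∫ t in a..(a + h n), F t) + (∫ t in (a + h n)..b, F t)
        = ∫ t in a..b, F t :=
      intervalIntegral.integral_add_adjacent_intervals (hFc.intervalIntegrable _ _)
        (hFc.intervalIntegrable _ _)
    rw [← c1, ← c2]; ring
  have step2 : ∀ c : ℝ, Tendsto (fun n => (∫ t in c..(c + h n), F t) / h n) atTop (𝓝 (F c)) := by
    intro c
    have hd : HasDerivAt (fun u => ∫ t in c..u, F t) (F c) c :=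
      intervalIntegral.integral_hasDerivAt_right (hFc.intervalIntegrable _ _)
        hFc.stronglyMeasurable.stronglyMeasurableAtFilter hFc.continuousAt
    rw [hasDerivAt_iff_tendsto_slope] at hd
    refine (hd.comp (hseq c)).congr fun n => ?_
    simp only [Function.comp_apply, slope_def_field, intervalIntegral.integral_same,
      add_sub_cancel_left]
    ring
  have hae : ∀ᵐ t ∂(volume.restrict (Ioc a b)),
      Tendsto (fun n => (F (t + h n) - F t) / h n) atTop (𝓝 (deriv F t)) := by
    refine ae_restrict_of_ae (hF.ae_differentiableAt.mono fun t ht => ?_)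
    have hd := ht.hasDerivAt
    rw [hasDerivAt_iff_tendsto_slope] at hd
    refine (hd.comp (hseq t)).congr fun n => ?_
    simp only [Function.comp_apply, slope_def_field, add_sub_cancel_left]
  have hmeas : ∀ n, AEStronglyMeasurable (fun t => (F (t + h n) - F t) / h n)
      (volume.restrict (Ioc a b)) :=
    fun n => (((hFc.comp (continuous_add_right _)).sub hFc).div_const _).aestronglyMeasurable.restrict
  have hbound : ∀ n, ∀ᵐ t ∂(volume.restrict (Ioc a b)),
      ‖(F (t + h n) - F t) / h n‖ ≤ (L : ℝ) := by
    intro n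
    refine ae_of_all _ fun t => ?_
    have hd := hF.dist_le_mul (t + h n) t
    rw [Real.dist_eq, Real.dist_eq] at hd
    rw [Real.norm_eq_abs, abs_div, abs_of_pos (hpos n), div_le_iff₀ (hpos n)]
    simpa [abs_of_pos (hpos n)] using hd
  have hbi : Integrable (fun _ : ℝ => (L : ℝ)) (volume.restrict (Ioc a b)) :=
    integrableOn_const measure_Ioc_lt_top.ne
  have hDCT := MeasureTheory.tendsto_integral_of_dominated_convergence _ hmeas hbi hbound hae
  have key : Tendsto (fun n => ∫ t in a..b, (F (t + h n) - F t) / h n) atTop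
      (𝓝 (∫ t in a..b, deriv F t)) := by
    simpa only [intervalIntegral.integral_of_le hab] using hDCT
  have key2 : Tendsto (fun n => ∫ t in a..b, (F (t + h n) - F t) / h n) atTop
      (𝓝 (F b - F a)) := by
    refine ((step2 b).sub (step2 a)).congr fun n => ?_
    rw [step1 n, sub_div]
  exact tendsto_nhds_unique key key2

lemma lip_sq_div_le {L : NNReal} {F : ℝ → ℝ} (hF : LipschitzWith L F) {a b : ℝ} (hab : a < b) :
    (F b - F a) ^ 2 / (b - a) ≤ ∫ t in a..b, (deriv F t) ^ 2 := by
  set c : ℝ := (F b - F a) / (b - a) with hc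
  have hba : (0:ℝ) < b - a := sub_pos.2 hab
  have i1 : IntervalIntegrable (fun t => (deriv F t) ^ 2) volume a b := lip_deriv_sq_intInt hF a b
  have i2 : IntervalIntegrable (fun t => 2 * c * deriv F t) volume a b :=
    (lip_deriv_intInt hF a b).const_mul _
  have h0 : (0:ℝ) ≤ ∫ t in a..b, ((deriv F t) ^ 2 - 2 * c * deriv F t + c ^ 2) :=
    intervalIntegral.integral_nonneg hab.le fun t _ => by nlinarith [sq_nonneg (deriv F t - c)]
  rw [intervalIntegral.integral_add (i1.sub i2) intervalIntegrable_const,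
    intervalIntegral.integral_sub i1 i2, intervalIntegral.integral_const_mul,
    lip_ftc hF hab.le, intervalIntegral.integral_const, smul_eq_mul] at h0
  have hF2 : F b - F a = c * (b - a) := by rw [hc, div_mul_cancel₀ _ hba.ne']
  have hcsq : c ^ 2 * (b - a) = (F b - F a) ^ 2 / (b - a) := by
    rw [hc, div_pow, eq_div_iff hba.ne']; field_simp
  rw [hF2] at h0
  rw [← hcsq]
  nlinarith [h0]

lemma affine_lip (m c : ℝ) : ∃ L : NNReal, LipschitzWith L (fun t => m * t + c) := by
  refine ⟨⟨|m|, abs_nonneg m⟩, LipschitzWith.of_dist_le_mul fun x y => ?_⟩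
  simp only [Real.dist_eq]
  have : m * x + c - (m * y + c) = m * (x - y) := by ring
  rw [this, abs_mul]
  rfl

lemma affine_deriv (m c t : ℝ) : deriv (fun t => m * t + c) t = m := by
  have : HasDerivAt (fun t => m * t + c) (m * 1) t :=
    ((hasDerivAt_id t).const_mul m).add_const c
  simpa using this.deriv

/-- One-dimensional, two-valued characterization of Dirichlet quasiminimizers:
`u = [[f]] + [[g]]` is a Dirichlet `K`-quasiminimizer on `(-1,1)` (its energy on each
subinterval is at most `K` times the energy of any Lipschitz competitor with the same
boundary values) if and only if on each subinterval `[a,b] ⊂ (-1,1)` its energy is at most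
`K · G²(u(b), u(a))/(b - a)`. -/
theorem quasiminimizer_characterization_one_dim (K : ℝ) (hK : 1 ≤ K) (f g : ℝ → ℝ)
    (hf : ∃ L, LipschitzWith L f) (hg : ∃ L, LipschitzWith L g)
    (hfg : ∀ x ∈ Ioo (-1 : ℝ) 1, f x ≤ g x) :
    (∀ a b : ℝ, -1 < a → a < b → b < 1 →
      ∀ F G : ℝ → ℝ, (∃ L, LipschitzWith L F) → (∃ L, LipschitzWith L G) →
        (∀ x ∈ Icc a b, F x ≤ G x) →
        F a = f a → G a = g a → F b = f b → G b = g b →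
        ∫ t in a..b, ((deriv f t) ^ 2 + (deriv g t) ^ 2) ≤
          K * ∫ t in a..b, ((deriv F t) ^ 2 + (deriv G t) ^ 2)) ↔
    (∀ a b : ℝ, -1 < a → a < b → b < 1 →
      ∫ t in a..b, ((deriv f t) ^ 2 + (deriv g t) ^ 2) ≤
        K * (((f b - f a) ^ 2 + (g b - g a) ^ 2) / (b - a))) := by
  constructor
  · -- (i) → (ii): use affine competitors
    intro H a b ha hab hb
    have hba : (0:ℝ) < b - a := sub_pos.2 hab
    set m1 : ℝ := (f b - f a) / (b - a) with hm1
    set m2 : ℝ := (g b - g a) / (b - a) with hm2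
    set F : ℝ → ℝ := fun t => m1 * t + (f a - m1 * a) with hFdef
    set G : ℝ → ℝ := fun t => m2 * t + (g a - m2 * a) with hGdef
    have hfa : f a ≤ g a := hfg a ⟨ha, hab.trans hb⟩
    have hfb : f b ≤ g b := hfg b ⟨ha.trans hab, hb⟩
    have hFa : F a = f a := by simp [hFdef]
    have hGa : G a = g a := by simp [hGdef]
    have hFb : F b = f b := by simp only [hFdef]; rw [hm1]; field_simp; ring
    have hGb : G b = g b := by simp only [hGdef]; rw [hm2]; field_simp; ring
    have hFG : ∀ x ∈ Icc a b, F x ≤ G x := by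
      intro t ht
      rw [← sub_nonneg]
      have e : G t - F t = (((g b - g a) - (f b - f a)) * (t - a)
          + (g a - f a) * (b - a)) / (b - a) := by
        simp only [hFdef, hGdef, hm1, hm2]
        field_simp
        ring
      rw [e]
      apply div_nonneg _ hba.le
      nlinarith [ht.1, ht.2, mul_le_mul_of_nonneg_right hfb (sub_nonneg.2 ht.1),
        mul_le_mul_of_nonneg_right hfa (sub_nonneg.2 (ht.1.trans ht.2 : a ≤ b))]
    have key := H a b ha hab hb F G (affine_lip m1 _) (affine_lip m2 _) hFG hFa hGa hFb hGb
    have hconst : (∫ t in a..b, ((deriv F t) ^ 2 + (deriv G t) ^ 2))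
        = (b - a) * (m1 ^ 2 + m2 ^ 2) := by
      have : ∀ t ∈ uIcc a b, ((deriv F t) ^ 2 + (deriv G t) ^ 2) = m1 ^ 2 + m2 ^ 2 := by
        intro t _
        rw [hFdef, hGdef, affine_deriv, affine_deriv]
      rw [intervalIntegral.integral_congr this, intervalIntegral.integral_const, smul_eq_mul]
    have hval : (b - a) * (m1 ^ 2 + m2 ^ 2)
        = ((f b - f a) ^ 2 + (g b - g a) ^ 2) / (b - a) := by
      rw [hm1, hm2]
      field_simp
    calc ∫ t in a..b, ((deriv f t) ^ 2 + (deriv g t) ^ 2)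
        ≤ K * ∫ t in a..b, ((deriv F t) ^ 2 + (deriv G t) ^ 2) := key
      _ = K * (((f b - f a) ^ 2 + (g b - g a) ^ 2) / (b - a)) := by rw [hconst, hval]
  · -- (ii) → (i): competitor energy dominates G²/(b-a)
    intro H a b ha hab hb F G hFl hGl hFG hFa hGa hFb hGb
    obtain ⟨LF, hLF⟩ := hFl
    obtain ⟨LG, hLG⟩ := hGl
    have hK0 : (0:ℝ) ≤ K := le_trans zero_le_one hK
    have iF := lip_deriv_sq_intInt hLF a b
    have iG := lip_deriv_sq_intInt hLG a b
    have hsplit : (∫ t in a..b, ((deriv F t) ^ 2 + (deriv G t) ^ 2))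
        = (∫ t in a..b, (deriv F t) ^ 2) + ∫ t in a..b, (deriv G t) ^ 2 :=
      intervalIntegral.integral_add iF iG
    have hFineq := lip_sq_div_le hLF hab
    have hGineq := lip_sq_div_le hLG hab
    calc ∫ t in a..b, ((deriv f t) ^ 2 + (deriv g t) ^ 2)
        ≤ K * (((f b - f a) ^ 2 + (g b - g a) ^ 2) / (b - a)) := H a b ha hab hb
      _ ≤ K * ∫ t in a..b, ((deriv F t) ^ 2 + (deriv G t) ^ 2) := by
          apply mul_le_mul_of_nonneg_left _ hK0
          rw [hsplit, ← hFa, ← hFb, ← hGa, ← hGb, add_div]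
          exact add_le_add hFineq hGineq
end
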